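/- For positive integers U, n, m, g with g < m/2, m ≤ n, 2m ≤ U − n, and U = n^{1+α} for real α > 0, let γ = α/(6(1+α)). Then C(U − n − m, m − g) ≥ 2^{3γ·m·log₂ U − m}. Concretely: C(U−n−m, m−g) ≥ C(U, m−g)·2^{−m} ≥ C(U, ⌈m/2⌉)·2^{−m} ≥ (U/m)^{m/2}·2^{−m} ≥ U^{3γm}·2^{−m}, using m ≤ n = U^{1/(1+α)} and m ≤ U/2. -/

import Mathlib

lemma div_pow_le_choose : ∀ (k M : ℕ), k ≤ M → ((M : ℝ) / k) ^ k ≤ (M.choose k : ℝ) := by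
  intro k
  induction k with
  | zero => intro M _; simp
  | succ k ih =>
    intro M hM
    have hM1 : 1 ≤ M := le_trans (Nat.succ_le_succ (Nat.zero_le k)) hM
    have hk' : k ≤ M - 1 := by omega
    have h1 := ih (M - 1) hk'
    have hcast : ((M - 1 : ℕ) : ℝ) = (M : ℝ) - 1 := by
      have : (M - 1) + 1 = M := by omega
      have := congrArg (fun x : ℕ => (x : ℝ)) this
      push_cast at this
      linarith
    have key : (M : ℕ) * (M - 1).choose k = M.choose (k + 1) * (k + 1) := by
      have h := Nat.add_one_mul_choose_eq (M - 1) k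
      have hs : M - 1 + 1 = M := by omega
      rw [hs] at h
      simpa [Nat.succ_eq_add_one] using h
    have keyR : (M : ℝ) * ((M - 1).choose k : ℝ) = (M.choose (k + 1) : ℝ) * (k + 1) := by
      exact_mod_cast congrArg (fun x : ℕ => (x : ℝ)) key
    have hstep : ((M : ℝ) / (k + 1)) ^ k ≤ (((M : ℝ) - 1) / k) ^ k := by
      rcases Nat.eq_zero_or_pos k with h0 | hk0
      · simp [h0]
      · have hk0R : (0 : ℝ) < k := by exact_mod_cast hk0
        have hMR : (k : ℝ) + 1 ≤ M := by exact_mod_cast hM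
        apply pow_le_pow_left₀ (by positivity)
        rw [div_le_div_iff₀ (by positivity) hk0R]
        nlinarith
    have hnn : (0 : ℝ) ≤ (M : ℝ) / (k + 1) := by positivity
    calc ((M : ℝ) / (k + 1 : ℕ)) ^ (k + 1)
        = ((M : ℝ) / (k + 1)) * ((M : ℝ) / (k + 1)) ^ k := by push_cast; ring
      _ ≤ ((M : ℝ) / (k + 1)) * (((M : ℝ) - 1) / k) ^ k :=
          mul_le_mul_of_nonneg_left hstep hnn
      _ ≤ ((M : ℝ) / (k + 1)) * ((M - 1).choose k : ℝ) := by
          apply mul_le_mul_of_nonneg_left _ hnn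
          rwa [hcast] at h1
      _ = ((M : ℝ) * ((M - 1).choose k : ℝ)) / (k + 1) := by ring
      _ = (M.choose (k + 1) : ℝ) := by
          rw [keyR]; field_simp

/-- For `U = n^{1+α}`, `γ = α/(6(1+α))`, `g < m/2`, `2m ≤ U − n`, `m ≤ n`:
`C(U − n − m, m − g) ≥ U^{3γm} · 2^{−m}` (i.e. `≥ 2^{3γ·m·log₂ U − m}`). -/
theorem choose_remaining_ge (U n m g : ℕ) (α γ : ℝ) (hα : 0 < α)
    (hγ : γ = α / (6 * (1 + α)))
    (hUn : (U : ℝ) = (n : ℝ) ^ ((1 : ℝ) + α))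
    (hg : 2 * g < m) (hmn : m ≤ n) (h2m : 2 * m ≤ U - n) (hn : 0 < n) :
    (U : ℝ) ^ (3 * γ * m) * 2 ^ (-(m : ℝ)) ≤ (((U - n - m).choose (m - g) : ℕ) : ℝ) := by
  set k := m - g with hk
  set M := U - n - m with hMdef
  have hm1 : 0 < m := by omega
  have hk1 : 0 < k := by omega
  have hkm : k ≤ m := by omega
  have h2k : m ≤ 2 * k := by omega
  have hnU : n + 2 * m ≤ U := by omega
  have hMm : m ≤ M := by omega
  have hkM : k ≤ M := le_trans hkm hMm
  have hn0 : (0 : ℝ) < n := by exact_mod_cast hn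
  have hm0 : (0 : ℝ) < m := by exact_mod_cast hm1
  have hk0 : (0 : ℝ) < k := by exact_mod_cast hk1
  have hM0 : (0 : ℝ) < M := by exact_mod_cast lt_of_lt_of_le hm1 hMm
  have h1α : (0 : ℝ) < 1 + α := by linarith
  have hMcast : (M : ℝ) = (U : ℝ) - n - m := by
    have h : M + n + m = U := by omega
    have := congrArg (fun x : ℕ => (x : ℝ)) h
    push_cast at this
    linarith
  have hUR : (n : ℝ) + 2 * m ≤ U := by exact_mod_cast hnU
  have hmnR : (m : ℝ) ≤ n := by exact_mod_cast hmn
  -- U = n * n^α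
  have hUsplit : (U : ℝ) = n * (n : ℝ) ^ α := by
    rw [hUn, Real.rpow_add hn0, Real.rpow_one]
  have hA0 : (0 : ℝ) ≤ (n : ℝ) ^ α := Real.rpow_nonneg hn0.le α
  -- key integer-style inequality: U * m ≤ 4 * n * M
  have hkey : (U : ℝ) * m ≤ 4 * n * M := by
    rw [hMcast]; nlinarith [hm0, hn0]
  -- base inequality
  have hbase : (n : ℝ) ^ α / 4 ≤ (M : ℝ) / m := by
    rw [div_le_div_iff₀ (by norm_num) hm0]
    have : (n : ℝ) * ((n : ℝ) ^ α * m) ≤ (n : ℝ) * (M * 4) := by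
      calc (n : ℝ) * ((n : ℝ) ^ α * m) = (n * (n : ℝ) ^ α) * m := by ring
        _ = (U : ℝ) * m := by rw [← hUsplit]
        _ ≤ 4 * n * M := hkey
        _ = (n : ℝ) * (M * 4) := by ring
    exact le_of_mul_le_mul_left this hn0
  have hbase1 : (1 : ℝ) ≤ (M : ℝ) / m := (one_le_div hm0).mpr (by exact_mod_cast hMm)
  -- LHS equals (n^α / 4) ^ (m/2)
  have hexp : 3 * γ * m * (1 + α) = α * m / 2 := by
    rw [hγ]; field_simp; ring
  have hU1 : (U : ℝ) ^ (3 * γ * m) = (n : ℝ) ^ (α * m / 2) := by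
    rw [hUn, ← Real.rpow_mul hn0.le]
    congr 1
    linarith [hexp]
  have h4 : (4 : ℝ) ^ ((m : ℝ) / 2) = 2 ^ (m : ℝ) := by
    have h42 : (4 : ℝ) = 2 ^ (2 : ℝ) := by
      rw [show (2:ℝ) = ((2:ℕ):ℝ) by norm_num, Real.rpow_natCast]; norm_num
    rw [h42, ← Real.rpow_mul (by norm_num)]
    congr 1
    ring
  have hLHS : (U : ℝ) ^ (3 * γ * m) * 2 ^ (-(m : ℝ))
      = ((n : ℝ) ^ α / 4) ^ ((m : ℝ) / 2) := by
    have h2 : (2 : ℝ) ^ (-(m : ℝ)) = ((2:ℝ) ^ (m : ℝ))⁻¹ := Real.rpow_neg (by norm_num) m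
    rw [hU1, h2, Real.div_rpow hA0 (by norm_num), h4, ← Real.rpow_mul hn0.le,
      div_eq_mul_inv]
    congr 2
    ring
  rw [hLHS]
  calc ((n : ℝ) ^ α / 4) ^ ((m : ℝ) / 2)
      ≤ ((M : ℝ) / m) ^ ((m : ℝ) / 2) := Real.rpow_le_rpow (by positivity) hbase (by positivity)
    _ ≤ ((M : ℝ) / m) ^ ((k : ℕ) : ℝ) := by
        apply Real.rpow_le_rpow_of_exponent_le hbase1
        have : (m : ℝ) ≤ 2 * k := by exact_mod_cast h2k
        linarith
    _ = ((M : ℝ) / m) ^ k := Real.rpow_natCast _ k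
    _ ≤ ((M : ℝ) / k) ^ k := by
        apply pow_le_pow_left₀ (by positivity)
        exact div_le_div_of_nonneg_left hM0.le hk0 (by exact_mod_cast hkm)
    _ ≤ (M.choose k : ℝ) := div_pow_le_choose k M hkM
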